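/- Let A ∈ (0,1), M ∈ (-1,0), Q > 0 with AMQ + C < 0 and C > 0, and let v_p > 0 satisfy -AM < v_p. Define I(v₀) = ((AMQ+C)/(AQS))·ln((C-Qv_p)/(C-Qv₀)) + (M/S)·ln(v₀/v_p) for v₀ ∈ (C/Q, -AM), with S > 0. Then I is continuous and strictly increasing on (C/Q, -AM), I(v₀) → -∞ as v₀ → (C/Q)⁺, and I(-AM) > 0; consequently there exists a unique v₀ ∈ (C/Q, -AM) with I(v₀) = 0. -/

import Mathlib

open Real Filter Set

private lemma aux_deriv (A M C Q S : ℝ) (hA : A ≠ 0) (hQ : Q ≠ 0) (hS : S ≠ 0)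
    {x : ℝ} (hx : x ≠ 0) (hcx : C - Q*x ≠ 0) :
    HasDerivAt (fun x => ((A*M*Q + C)/(A*Q*S)) * Real.log (C - Q*x) - (M/S) * Real.log x)
      (-(C*(x + A*M)/(A*S*x*(C-Q*x)))) x := by
  have h1 : HasDerivAt (fun x : ℝ => C - Q*x) (-Q) x := by
    simpa using ((hasDerivAt_id x).const_mul Q).const_sub C
  have h2 := (h1.log hcx).const_mul ((A*M*Q + C)/(A*Q*S))
  have h3 := (Real.hasDerivAt_log hx).const_mul (M/S)
  have h4 := h2.sub h3
  refine h4.congr_deriv ?_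
  field_simp
  ring

theorem stmt_9 (A M C Q S v_p : ℝ)
    (hA : A ∈ Set.Ioo (0:ℝ) 1) (hM : M ∈ Set.Ioo (-1:ℝ) 0)
    (hC : 0 < C) (hQ : 0 < Q) (hS : 0 < S)
    (hdeg : A*M*Q + C < 0) (hvp : -(A*M) < v_p)
    (I : ℝ → ℝ)
    (hI : ∀ v₀, I v₀ = ((A*M*Q + C)/(A*Q*S)) * Real.log ((C - Q*v_p)/(C - Q*v₀))
        + (M/S) * Real.log (v₀/v_p)) :
    ContinuousOn I (Set.Ioo (C/Q) (-(A*M))) ∧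
    StrictMonoOn I (Set.Ioo (C/Q) (-(A*M))) ∧
    Filter.Tendsto I (nhdsWithin (C/Q) (Set.Ioi (C/Q))) Filter.atBot ∧
    0 < I (-(A*M)) ∧
    (∃! v₀ : ℝ, v₀ ∈ Set.Ioo (C/Q) (-(A*M)) ∧ I v₀ = 0) := by
  obtain ⟨hA0, hA1⟩ := hA
  obtain ⟨hM1, hM0⟩ := hM
  have hAM : A*M < 0 := mul_neg_of_pos_of_neg hA0 hM0
  have ha0 : 0 < -(A*M) := by linarith
  have hCQ0 : 0 < C/Q := div_pos hC hQ
  have hCQa : C/Q < -(A*M) := by rw [div_lt_iff₀ hQ]; nlinarith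
  have hvp0 : 0 < v_p := ha0.trans hvp
  have hK : (A*M*Q + C)/(A*Q*S) < 0 := div_neg_of_neg_of_pos hdeg (by positivity)
  set K := (A*M*Q + C)/(A*Q*S) with hKdef
  set F : ℝ → ℝ := fun x => K * Real.log (C - Q*x) - (M/S) * Real.log x with hFdef
  have hcne : ∀ x : ℝ, C/Q < x → C - Q*x < 0 := fun x hx => by
    rw [div_lt_iff₀ hQ] at hx; nlinarith
  have hcvp : C - Q*v_p < 0 := hcne v_p (hCQa.trans hvp)
  have hIF : ∀ v : ℝ, v ≠ 0 → C - Q*v ≠ 0 → I v = F v_p - F v := by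
    intro v hv hcv
    rw [hI v, hFdef]
    rw [Real.log_div (ne_of_lt hcvp) hcv, Real.log_div hv (ne_of_gt hvp0)]
    ring
  have hU : IsOpen {w : ℝ | w ≠ 0 ∧ C - Q*w ≠ 0} := by
    have : {w : ℝ | w ≠ 0 ∧ C - Q*w ≠ 0}
        = {w : ℝ | w ≠ 0} ∩ ((fun w => C - Q*w) ⁻¹' {(0:ℝ)}ᶜ) := rfl
    rw [this]
    exact isOpen_ne.inter (isOpen_compl_singleton.preimage (by continuity))
  have hFderiv : ∀ x : ℝ, x ≠ 0 → C - Q*x ≠ 0 →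
      HasDerivAt F (-(C*(x + A*M)/(A*S*x*(C-Q*x)))) x := by
    intro x hx hcx
    exact aux_deriv A M C Q S (ne_of_gt hA0) (ne_of_gt hQ) (ne_of_gt hS) hx hcx
  have key : ∀ v : ℝ, v ≠ 0 → C - Q*v ≠ 0 →
      HasDerivAt I (C*(v + A*M)/(A*S*v*(C-Q*v))) v := by
    intro v hv hcv
    have hd : HasDerivAt (fun w => F v_p - F w) (C*(v + A*M)/(A*S*v*(C-Q*v))) v := by
      have h := (hasDerivAt_const v (F v_p)).sub (hFderiv v hv hcv)
      have : (0:ℝ) - -(C*(v + A*M)/(A*S*v*(C-Q*v))) = C*(v + A*M)/(A*S*v*(C-Q*v)) := by ring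
      rwa [this] at h
    refine hd.congr_of_eventuallyEq ?_
    filter_upwards [hU.mem_nhds ⟨hv, hcv⟩] with w hw
    exact hIF w hw.1 hw.2
  have memIoo : ∀ v ∈ Set.Ioo (C/Q) (-(A*M)), 0 < v ∧ C - Q*v < 0 := fun v hv =>
    ⟨hCQ0.trans hv.1, hcne v hv.1⟩
  have keyI : ∀ v ∈ Set.Ioo (C/Q) (-(A*M)),
      HasDerivAt I (C*(v + A*M)/(A*S*v*(C-Q*v))) v := fun v hv =>
    key v (ne_of_gt (memIoo v hv).1) (ne_of_lt (memIoo v hv).2)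
  have hcont : ContinuousOn I (Set.Ioo (C/Q) (-(A*M))) := fun v hv =>
    ((keyI v hv).continuousAt).continuousWithinAt
  have hDpos : ∀ v ∈ Set.Ioo (C/Q) (-(A*M)), 0 < C*(v + A*M)/(A*S*v*(C-Q*v)) := by
    intro v hv
    obtain ⟨hv0, hcv⟩ := memIoo v hv
    have h1 : C*(v + A*M) < 0 := mul_neg_of_pos_of_neg hC (by have := hv.2; linarith)
    have h2 : A*S*v*(C-Q*v) < 0 := mul_neg_of_pos_of_neg (by positivity) hcv
    exact div_pos_of_neg_of_neg h1 h2
  have hmono : StrictMonoOn I (Set.Ioo (C/Q) (-(A*M))) := by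
    apply strictMonoOn_of_deriv_pos (convex_Ioo _ _) hcont
    intro x hx
    rw [interior_Ioo] at hx
    rw [(keyI x hx).deriv]
    exact hDpos x hx
  -- positivity at -(A*M)
  have haz : (-(A*M)) ≠ 0 := ne_of_gt ha0
  have hca : C - Q*(-(A*M)) < 0 := hcne _ hCQa
  have hIa : I (-(A*M)) = F v_p - F (-(A*M)) := hIF _ haz (ne_of_lt hca)
  have hFmono : StrictMonoOn F (Set.Icc (-(A*M)) v_p) := by
    apply strictMonoOn_of_deriv_pos (convex_Icc _ _)
    · intro x hx
      have hx0 : (0:ℝ) < x := lt_of_lt_of_le ha0 hx.1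
      have hcx : C - Q*x < 0 := hcne x (lt_of_lt_of_le hCQa hx.1)
      exact ((hFderiv x (ne_of_gt hx0) (ne_of_lt hcx)).continuousAt).continuousWithinAt
    · intro x hx
      rw [interior_Icc] at hx
      have hx0 : (0:ℝ) < x := ha0.trans hx.1
      have hcx : C - Q*x < 0 := hcne x (hCQa.trans hx.1)
      rw [(hFderiv x (ne_of_gt hx0) (ne_of_lt hcx)).deriv]
      have h1 : 0 < C*(x + A*M) := mul_pos hC (by have := hx.1; linarith)
      have h2 : A*S*x*(C-Q*x) < 0 := mul_neg_of_pos_of_neg (by positivity) hcx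
      have h3 : C*(x + A*M)/(A*S*x*(C-Q*x)) < 0 := div_neg_of_pos_of_neg h1 h2
      linarith
  have hIapos : 0 < I (-(A*M)) := by
    rw [hIa, sub_pos]
    exact hFmono ⟨le_refl _, le_of_lt hvp⟩ ⟨le_of_lt hvp, le_refl _⟩ hvp
  -- tendsto atBot
  have hlogC : Tendsto (fun v : ℝ => C - Q*v) (nhdsWithin (C/Q) (Set.Ioi (C/Q)))
      (nhdsWithin (0:ℝ) {(0:ℝ)}ᶜ) := by
    rw [tendsto_nhdsWithin_iff]
    constructor
    · have h : Tendsto (fun v : ℝ => C - Q*v) (nhds (C/Q)) (nhds (C - Q*(C/Q))) :=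
        (continuous_const.sub (continuous_const.mul continuous_id)).tendsto _
      have he : C - Q*(C/Q) = 0 := by field_simp; ring
      rw [he] at h
      exact h.mono_left nhdsWithin_le_nhds
    · filter_upwards [self_mem_nhdsWithin] with v hv
      simp only [Set.mem_compl_iff, Set.mem_singleton_iff]
      exact ne_of_lt (hcne v hv)
  have h1 : Tendsto (fun v : ℝ => Real.log (C - Q*v)) (nhdsWithin (C/Q) (Set.Ioi (C/Q))) atBot :=
    Real.tendsto_log_nhdsNE_zero.comp hlogC
  have h2 : Tendsto (fun v : ℝ => K * Real.log (C - Q*v)) (nhdsWithin (C/Q) (Set.Ioi (C/Q)))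
      atTop := (tendsto_const_mul_atTop_of_neg hK).mpr h1
  have h3 : Tendsto (fun v : ℝ => -((M/S) * Real.log v)) (nhdsWithin (C/Q) (Set.Ioi (C/Q)))
      (nhds (-((M/S) * Real.log (C/Q)))) := by
    have hc : ContinuousAt (fun v : ℝ => -((M/S) * Real.log v)) (C/Q) :=
      (continuousAt_const.mul (Real.continuousAt_log (ne_of_gt hCQ0))).neg
    exact hc.tendsto.mono_left nhdsWithin_le_nhds
  have hFtop : Tendsto F (nhdsWithin (C/Q) (Set.Ioi (C/Q))) atTop := by
    have h4 := h2.atTop_add h3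
    rw [hFdef]
    simpa [sub_eq_add_neg] using h4
  have htendsto : Tendsto I (nhdsWithin (C/Q) (Set.Ioi (C/Q))) atBot := by
    have hneg : Tendsto (fun v => -(F v)) (nhdsWithin (C/Q) (Set.Ioi (C/Q))) atBot :=
      tendsto_neg_atTop_atBot.comp hFtop
    have hF2 : Tendsto (fun v => F v_p - F v) (nhdsWithin (C/Q) (Set.Ioi (C/Q))) atBot := by
      simpa [sub_eq_add_neg] using tendsto_atBot_add_const_left _ (F v_p) hneg
    refine hF2.congr' ?_
    filter_upwards [self_mem_nhdsWithin] with v hv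
    exact (hIF v (ne_of_gt (hCQ0.trans hv)) (ne_of_lt (hcne v hv))).symm
  -- existence and uniqueness of the zero
  have hcontA : ContinuousAt I (-(A*M)) := (key _ haz (ne_of_lt hca)).continuousAt
  have hv1ex : ∃ v₁, v₁ ∈ Set.Ioo (C/Q) (-(A*M)) ∧ 0 < I v₁ := by
    have hT : Tendsto I (nhdsWithin (-(A*M)) (Set.Iio (-(A*M)))) (nhds (I (-(A*M)))) :=
      hcontA.continuousWithinAt
    have e1 : ∀ᶠ v in nhdsWithin (-(A*M)) (Set.Iio (-(A*M))), 0 < I v :=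
      hT.eventually (eventually_gt_nhds hIapos)
    have e2 : ∀ᶠ v in nhdsWithin (-(A*M)) (Set.Iio (-(A*M))),
        v ∈ Set.Ioo (C/Q) (-(A*M)) :=
      Ioo_mem_nhdsLT hCQa
    obtain ⟨v₁, hv₁a, hv₁b⟩ := (e2.and e1).exists
    exact ⟨v₁, hv₁a, hv₁b⟩
  obtain ⟨v₁, hv₁mem, hv₁pos⟩ := hv1ex
  have hv2ex : ∃ v₂, v₂ ∈ Set.Ioo (C/Q) v₁ ∧ I v₂ < 0 := by
    have e1 : ∀ᶠ v in nhdsWithin (C/Q) (Set.Ioi (C/Q)), I v < 0 :=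
      htendsto.eventually (eventually_lt_atBot 0)
    have e2 : ∀ᶠ v in nhdsWithin (C/Q) (Set.Ioi (C/Q)), v ∈ Set.Ioo (C/Q) v₁ :=
      Ioo_mem_nhdsGT hv₁mem.1
    obtain ⟨v₂, hv₂a, hv₂b⟩ := (e2.and e1).exists
    exact ⟨v₂, hv₂a, hv₂b⟩
  obtain ⟨v₂, hv₂mem, hv₂neg⟩ := hv2ex
  have hv2mem' : v₂ ∈ Set.Ioo (C/Q) (-(A*M)) := ⟨hv₂mem.1, hv₂mem.2.trans hv₁mem.2⟩
  have hsub : Set.Icc v₂ v₁ ⊆ Set.Ioo (C/Q) (-(A*M)) := fun x hx =>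
    ⟨lt_of_lt_of_le hv2mem'.1 hx.1, lt_of_le_of_lt hx.2 hv₁mem.2⟩
  have hivt := intermediate_value_Icc (le_of_lt hv₂mem.2) (hcont.mono hsub)
  have h0mem : (0:ℝ) ∈ Set.Icc (I v₂) (I v₁) := ⟨le_of_lt hv₂neg, le_of_lt hv₁pos⟩
  obtain ⟨c, hcmem, hc0⟩ := hivt h0mem
  refine ⟨hcont, hmono, htendsto, hIapos, ⟨c, ⟨hsub hcmem, hc0⟩, ?_⟩⟩
  rintro y ⟨hymem, hy0⟩
  exact hmono.injOn hymem (hsub hcmem) (by rw [hy0, hc0])
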